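/- Let c ∈ (0, 1/2) and let f : {-1,1}^n → {-1,1} satisfy H[f] ≥ cn. Then I[f] ≥ (c/(1+c))·h⁻¹(c²)·n, where h⁻¹ is the inverse of the binary entropy function on [0,1/2]; consequently H[f] ≤ ((1+c)/h⁻¹(c²))·I[f]. -/

import Mathlib

open Finset Real

noncomputable def chi {n : ℕ} (S : Finset (Fin n)) (x : Fin n → Bool) : ℝ :=
  ∏ i ∈ S, (if x i then (1:ℝ) else -1)

noncomputable def coeff {n : ℕ} (f : (Fin n → Bool) → ℝ) (S : Finset (Fin n)) : ℝ :=
  (∑ x : Fin n → Bool, f x * chi S x) / 2 ^ n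

noncomputable def spectralEntropy {n : ℕ} (f : (Fin n → Bool) → ℝ) : ℝ :=
  ∑ S : Finset (Fin n), (coeff f S) ^ 2 * Real.logb 2 (1 / (coeff f S) ^ 2)

noncomputable def totalInfluence {n : ℕ} (f : (Fin n → Bool) → ℝ) : ℝ :=
  ∑ S : Finset (Fin n), (S.card : ℝ) * (coeff f S) ^ 2

noncomputable def minEntropy {n : ℕ} (f : (Fin n → Bool) → ℝ) : ℝ :=
  ⨅ S : Finset (Fin n), Real.logb 2 (1 / (coeff f S) ^ 2)

noncomputable def fVar {n : ℕ} (f : (Fin n → Bool) → ℝ) : ℝ := 1 - (coeff f ∅) ^ 2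

def IsBoolean {n : ℕ} (f : (Fin n → Bool) → ℝ) : Prop := ∀ x, f x = 1 ∨ f x = -1

noncomputable def binEnt (x : ℝ) : ℝ :=
  x * Real.logb 2 (1 / x) + (1 - x) * Real.logb 2 (1 / (1 - x))

noncomputable def l1Norm {n : ℕ} (f : (Fin n → Bool) → ℝ) : ℝ :=
  ∑ S : Finset (Fin n), |coeff f S|

noncomputable def tensor {n m : ℕ} (f : (Fin n → Bool) → ℝ) (g : (Fin m → Bool) → ℝ) :
    (Fin (n + m) → Bool) → ℝ :=
  fun x => f (fun i => x (Fin.castAdd m i)) * g (fun j => x (Fin.natAdd n j))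

lemma sum_chi_mul_chi {n : ℕ} (x y : Fin n → Bool) :
    ∑ S : Finset (Fin n), chi S x * chi S y = if x = y then (2:ℝ)^n else 0 := by
  have h1 : ∀ S : Finset (Fin n), chi S x * chi S y
      = ∏ i ∈ S, ((if x i then (1:ℝ) else -1) * (if y i then (1:ℝ) else -1)) := by
    intro S; rw [chi, chi, ← Finset.prod_mul_distrib]
  set e : Fin n → ℝ := fun i => (if x i then (1:ℝ) else -1) * (if y i then (1:ℝ) else -1) with he
  have key : ∑ S : Finset (Fin n), ∏ i ∈ S, e i = ∏ i : Fin n, (e i + 1) := by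
    rw [Finset.prod_add]
    rw [← Finset.powerset_univ]
    apply Finset.sum_congr rfl
    intro S _
    simp
  by_cases hxy : x = y
  · subst hxy
    simp only [h1, key, if_pos rfl]
    have : ∀ i : Fin n, e i + 1 = 2 := by
      intro i; by_cases h : x i <;> simp [he, h] <;> norm_num
    rw [Finset.prod_congr rfl (fun i _ => this i)]
    simp
  · simp only [h1, key, if_neg hxy]
    obtain ⟨i, hi⟩ : ∃ i, x i ≠ y i := by
      by_contra h; push_neg at h; exact hxy (funext h)
    apply Finset.prod_eq_zero (Finset.mem_univ i)
    rcases Bool.eq_false_or_eq_true (x i) with h | h <;>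
      rcases Bool.eq_false_or_eq_true (y i) with h' | h' <;>
      simp_all [he]

lemma parseval {n : ℕ} (f : (Fin n → Bool) → ℝ) (hf : IsBoolean f) :
    ∑ S : Finset (Fin n), (coeff f S) ^ 2 = 1 := by
  have hsq : ∀ x, f x ^ 2 = 1 := by
    intro x; rcases hf x with h | h <;> rw [h] <;> ring
  have expand : ∀ S : Finset (Fin n),
      (coeff f S) ^ 2 = (∑ x : Fin n → Bool, ∑ y : Fin n → Bool,
        f x * f y * (chi S x * chi S y)) / ((2:ℝ) ^ n * 2 ^ n) := by
    intro S
    rw [coeff, div_pow, sq, Finset.sum_mul_sum]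
    congr 1
    · apply Finset.sum_congr rfl; intro x _; apply Finset.sum_congr rfl; intro y _; ring
    · ring
  rw [Finset.sum_congr rfl (fun S _ => expand S), ← Finset.sum_div]
  rw [Finset.sum_comm]
  have : ∀ x : Fin n → Bool, ∑ S : Finset (Fin n), ∑ y : Fin n → Bool,
      f x * f y * (chi S x * chi S y)
      = f x ^ 2 * 2 ^ n := by
    intro x
    rw [Finset.sum_comm]
    have : ∀ y : Fin n → Bool, ∑ S : Finset (Fin n), f x * f y * (chi S x * chi S y)
        = f x * f y * (if x = y then (2:ℝ)^n else 0) := by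
      intro y
      rw [← Finset.mul_sum, sum_chi_mul_chi]
    rw [Finset.sum_congr rfl (fun y _ => this y)]
    simp only [mul_ite, mul_zero]
    rw [Finset.sum_ite_eq (Finset.univ) x (fun y => f x * f y * (2:ℝ)^n)]
    simp [sq]
  rw [Finset.sum_congr rfl (fun x _ => this x)]
  simp only [hsq, one_mul]
  rw [Finset.sum_const]
  simp [Finset.card_univ]

lemma gibbs {α : Type*} [Fintype α] (w q : α → ℝ) (hw : ∀ a, 0 ≤ w a)
    (hq : ∀ a, 0 < q a) (hwsum : ∑ a, w a = 1) (hqsum : ∑ a : α, q a ≤ 1) :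
    ∑ a, w a * Real.logb 2 (1 / w a) ≤ ∑ a, w a * Real.logb 2 (1 / q a) := by
  have hlog2 : (0:ℝ) < Real.log 2 := Real.log_pos (by norm_num)
  have key : ∀ a : α, w a * Real.logb 2 (1 / w a)
      ≤ w a * Real.logb 2 (1 / q a) + (q a - w a) / Real.log 2 := by
    intro a
    rcases eq_or_lt_of_le (hw a) with h | h
    · rw [← h]
      have h0 : (0:ℝ) ≤ q a / Real.log 2 := div_nonneg (le_of_lt (hq a)) hlog2.le
      simpa using h0
    · have e1 : w a * Real.logb 2 (1 / w a) - w a * Real.logb 2 (1 / q a)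
          = w a * Real.log (q a / w a) / Real.log 2 := by
        rw [Real.logb, Real.logb, Real.log_div (ne_of_gt (hq a)) (ne_of_gt h), one_div, one_div,
          Real.log_inv, Real.log_inv]
        field_simp
        ring
      have e2 : w a * Real.log (q a / w a) ≤ q a - w a := by
        have h1 := Real.log_le_sub_one_of_pos (div_pos (hq a) h)
        calc w a * Real.log (q a / w a) ≤ w a * (q a / w a - 1) := by nlinarith
          _ = q a - w a := by field_simp
      have e3 : w a * Real.log (q a / w a) / Real.log 2 ≤ (q a - w a) / Real.log 2 :=
        (div_le_div_iff_of_pos_right hlog2).mpr e2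
      linarith
  calc ∑ a, w a * Real.logb 2 (1 / w a)
      ≤ ∑ a, (w a * Real.logb 2 (1 / q a) + (q a - w a) / Real.log 2) :=
        Finset.sum_le_sum (fun a _ => key a)
    _ = ∑ a, w a * Real.logb 2 (1 / q a) + ((∑ a, q a) - 1) / Real.log 2 := by
        rw [Finset.sum_add_distrib, ← Finset.sum_div, Finset.sum_sub_distrib, hwsum]
    _ ≤ ∑ a, w a * Real.logb 2 (1 / q a) := by
        have : ((∑ a, q a) - 1) / Real.log 2 ≤ 0 := by
          apply div_nonpos_of_nonpos_of_nonneg <;> linarith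
        linarith

lemma entropy_le_n {n : ℕ} (f : (Fin n → Bool) → ℝ) (hf : IsBoolean f) :
    spectralEntropy f ≤ n := by
  have h := gibbs (fun S => (coeff f S)^2) (fun _ : Finset (Fin n) => ((2:ℝ)^n)⁻¹)
    (fun S => sq_nonneg _) (fun S => by positivity) (parseval f hf) (by
      rw [Finset.sum_const, Finset.card_univ, Fintype.card_finset, Fintype.card_fin]
      simp)
  rw [spectralEntropy]
  calc ∑ S : Finset (Fin n), (coeff f S) ^ 2 * Real.logb 2 (1 / (coeff f S) ^ 2)
      ≤ ∑ S : Finset (Fin n), (coeff f S)^2 * Real.logb 2 (1 / ((2:ℝ)^n)⁻¹) := h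
    _ = ∑ S : Finset (Fin n), (coeff f S)^2 * n := by
        apply Finset.sum_congr rfl
        intro S _
        rw [one_div, inv_inv, Real.logb_pow, Real.logb_self_eq_one] <;> norm_num
    _ = n := by rw [← Finset.sum_mul, parseval f hf, one_mul]

lemma entropy_le_gibbs {n : ℕ} (f : (Fin n → Bool) → ℝ) (hf : IsBoolean f)
    (t : ℝ) (ht0 : 0 < t) (ht1 : t < 1) :
    spectralEntropy f ≤ totalInfluence f * Real.logb 2 (1/t)
      + ((n:ℝ) - totalInfluence f) * Real.logb 2 (1/(1-t)) := by
  have h1t : 0 < 1 - t := by linarith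
  set L₁ := Real.logb 2 (1/t) with hL1
  set L₂ := Real.logb 2 (1/(1-t)) with hL2
  set q : Finset (Fin n) → ℝ := fun S => t ^ S.card * (1-t) ^ (n - S.card) with hqdef
  have hqpos : ∀ S, 0 < q S := fun S => by positivity
  have hqsum : ∑ S : Finset (Fin n), q S = 1 := by
    calc ∑ S : Finset (Fin n), q S
        = ∑ S ∈ Finset.univ.powerset, (∏ _a ∈ S, t) * ∏ _a ∈ (Finset.univ \ S), (1-t) := by
          rw [Finset.powerset_univ]
          apply Finset.sum_congr rfl
          intro S _
          rw [Finset.prod_const, Finset.prod_const, ← Finset.compl_eq_univ_sdiff,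
            Finset.card_compl, Fintype.card_fin]
      _ = ∏ _i : Fin n, (t + (1-t)) := (Finset.prod_add _ _ _).symm
      _ = 1 := by simp
  have h := gibbs (fun S => (coeff f S)^2) q (fun S => sq_nonneg _) hqpos (parseval f hf)
    (le_of_eq hqsum)
  have hlogq : ∀ S : Finset (Fin n), Real.logb 2 (1 / q S)
      = (S.card : ℝ) * L₁ + ((n:ℝ) - S.card) * L₂ := by
    intro S
    have hcard : S.card ≤ n := by
      simpa using Finset.card_le_univ S
    have : (1:ℝ) / q S = (1/t) ^ S.card * (1/(1-t)) ^ (n - S.card) := by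
      rw [hqdef]
      field_simp
      rw [show t ^ S.card * (1 - t) ^ (n - S.card) * (1 / t) ^ S.card * (1 / (1 - t)) ^ (n - S.card) = (t * (1/t)) ^ S.card * ((1-t) * (1/(1-t))) ^ (n - S.card) by rw [mul_pow, mul_pow]; ring, mul_one_div_cancel ht0.ne', mul_one_div_cancel h1t.ne', one_pow, one_pow, one_mul]
    rw [this, Real.logb_mul (by positivity) (by positivity), Real.logb_pow, Real.logb_pow,
      hL1, hL2, Nat.cast_sub hcard]
  calc spectralEntropy f
      ≤ ∑ S : Finset (Fin n), (coeff f S)^2 * Real.logb 2 (1 / q S) := h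
    _ = ∑ S : Finset (Fin n), (((S.card : ℝ) * (coeff f S)^2) * (L₁ - L₂)
          + (coeff f S)^2 * ((n:ℝ) * L₂)) := by
        apply Finset.sum_congr rfl
        intro S _
        rw [hlogq S]
        ring
    _ = totalInfluence f * (L₁ - L₂) + 1 * ((n:ℝ) * L₂) := by
        rw [Finset.sum_add_distrib, ← Finset.sum_mul, ← Finset.sum_mul, parseval f hf,
          totalInfluence]
    _ = totalInfluence f * L₁ + ((n:ℝ) - totalInfluence f) * L₂ := by ring

theorem FEI_high_entropy (c : ℝ) (hc1 : 0 < c) (hc2 : c < 1 / 2)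
    {n : ℕ} (f : (Fin n → Bool) → ℝ) (hf : IsBoolean f)
    (hH : c * n ≤ spectralEntropy f)
    (t : ℝ) (ht0 : 0 ≤ t) (ht1 : t ≤ 1 / 2) (htc : binEnt t = c ^ 2) :
    (c / (1 + c)) * t * n ≤ totalInfluence f ∧
    spectralEntropy f ≤ ((1 + c) / t) * totalInfluence f := by
  have hI0 : 0 ≤ totalInfluence f :=
    Finset.sum_nonneg (fun S _ => mul_nonneg (Nat.cast_nonneg _) (sq_nonneg _))
  have ht0' : 0 < t := by
    rcases eq_or_lt_of_le ht0 with h | h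
    · exfalso
      rw [← h] at htc
      simp [binEnt] at htc
      nlinarith
    · exact h
  have ht1' : t < 1 := by linarith
  have h1t : 0 < 1 - t := by linarith
  set L₁ := Real.logb 2 (1/t) with hL1
  set L₂ := Real.logb 2 (1/(1-t)) with hL2
  have hbin : t * L₁ + (1 - t) * L₂ = c^2 := by rw [hL1, hL2, ← htc]; rfl
  have hL12 : L₂ ≤ L₁ := by
    rw [hL1, hL2, Real.logb, Real.logb]
    have hx : Real.log (1/(1-t)) ≤ Real.log (1/t) :=
      Real.log_le_log (by positivity) (one_div_le_one_div_of_le ht0' (by linarith))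
    exact (div_le_div_iff_of_pos_right (Real.log_pos (by norm_num))).mpr hx
  have hgibbs := entropy_le_gibbs f hf t ht0' ht1'
  have hIt : t * n ≤ totalInfluence f := by
    by_contra hcon
    push_neg at hcon
    have hn0 : (0:ℝ) < n := by
      by_contra hn
      push_neg at hn
      have hn' : (n:ℝ) = 0 := le_antisymm hn (Nat.cast_nonneg n)
      rw [hn', mul_zero] at hcon
      linarith
    have e1 : totalInfluence f * L₁ + ((n:ℝ) - totalInfluence f) * L₂
        ≤ (t*(n:ℝ)) * L₁ + ((n:ℝ) - t*(n:ℝ)) * L₂ := by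
      nlinarith [mul_nonneg (sub_nonneg.mpr hcon.le) (sub_nonneg.mpr hL12)]
    have e2 : (t*(n:ℝ)) * L₁ + ((n:ℝ) - t*(n:ℝ)) * L₂ = c^2 * n := by
      have : (t*(n:ℝ)) * L₁ + ((n:ℝ) - t*(n:ℝ)) * L₂ = (t * L₁ + (1-t) * L₂) * n := by ring
      rw [this, hbin]
    have key : c * n ≤ c^2 * n := by linarith
    nlinarith [mul_pos (mul_pos hc1 (show (0:ℝ) < 1 - c by linarith)) hn0]
  constructor
  · have h1 : c/(1+c) ≤ 1 := by
      rw [div_le_one (by linarith)]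
      linarith
    have htn : 0 ≤ t * n := mul_nonneg ht0 (Nat.cast_nonneg n)
    calc (c/(1+c)) * t * (n:ℝ) = (c/(1+c)) * (t * n) := by ring
      _ ≤ 1 * (t * n) := mul_le_mul_of_nonneg_right h1 htn
      _ = t * n := one_mul _
      _ ≤ totalInfluence f := hIt
  · have hn := entropy_le_n f hf
    have h2 : ((1+c)/t) * (t * (n:ℝ)) ≤ ((1+c)/t) * totalInfluence f :=
      mul_le_mul_of_nonneg_left hIt (by positivity)
    have e : ((1+c)/t) * (t * (n:ℝ)) = (1+c) * n := by field_simp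
    have h3 : (n:ℝ) ≤ (1+c) * n := by nlinarith [Nat.cast_nonneg (α := ℝ) n]
    linarith
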